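/- In a symmetric n-player game on a compact convex strategy set T with continuous payoffs quasi-concave in own strategy, there exists a symmetric Nash equilibrium: some t* ∈ T with u_1(t*, t*, …, t*) = max_{t∈T} u_1(t, t*, …, t*). -/
import Mathlib


/-- existence of a symmetric Nash equilibrium in a symmetric n-player game on a
compact convex strategy set T ⊆ ℝ, with payoff continuous and quasi-concave in own strategy. -/
theorem symmetric_nash_equilibrium_exists
    {n : ℕ} (hn : 0 < n) (T : Set ℝ)
    (hTne : T.Nonempty) (hTcomp : IsCompact T) (hTconv : Convex ℝ T)
    (u : (Fin n → ℝ) → ℝ) (hu : Continuous u)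
    (hqc : ∀ t ∈ T, QuasiconcaveOn ℝ T
      (fun t₁ => u (Function.update (fun _ => t) (⟨0, hn⟩ : Fin n) t₁))) :
    ∃ ts ∈ T, ∀ t₁ ∈ T,
      u (Function.update (fun _ => ts) (⟨0, hn⟩ : Fin n) t₁) ≤ u (fun _ => ts) := by
  classical
  set i0 : Fin n := ⟨0, hn⟩ with hi0
  set h : ℝ → ℝ → ℝ := fun s t => u (Function.update (fun _ => s) i0 t) with hh
  have hcont : Continuous fun p : ℝ × ℝ => h p.1 p.2 := by
    apply hu.comp
    apply continuous_pi
    intro j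
    by_cases hj : j = i0
    · simpa [hh, Function.update_apply, hj] using continuous_snd
    · simpa [hh, Function.update_apply, hj] using continuous_fst
  -- best-response graph
  set G : Set (ℝ × ℝ) :=
    {p : ℝ × ℝ | p.1 ∈ T ∧ p.2 ∈ T ∧ ∀ t' ∈ T, h p.1 t' ≤ h p.1 p.2} with hG
  have hGsub : G ⊆ T ×ˢ T := fun p hp => ⟨hp.1, hp.2.1⟩
  have hGclosed : IsClosed G := by
    have hGeq : G = (T ×ˢ T) ∩ ⋂ t' ∈ T, {p : ℝ × ℝ | h p.1 t' ≤ h p.1 p.2} := by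
      ext p
      simp only [hG, Set.mem_setOf_eq, Set.mem_inter_iff, Set.mem_prod, Set.mem_iInter]
      tauto
    rw [hGeq]
    refine (hTcomp.isClosed.prod hTcomp.isClosed).inter
      (isClosed_biInter fun t' _ => isClosed_le ?_ hcont)
    exact hcont.comp (continuous_fst.prodMk continuous_const)
  have hGcomp : IsCompact G :=
    (hTcomp.prod hTcomp).of_isClosed_subset hGclosed hGsub
  set A : Set ℝ := Prod.fst '' (G ∩ {p : ℝ × ℝ | p.2 ≤ p.1}) with hA
  set B : Set ℝ := Prod.fst '' (G ∩ {p : ℝ × ℝ | p.1 ≤ p.2}) with hB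
  have hAclosed : IsClosed A :=
    ((hGcomp.inter_right (isClosed_le continuous_snd continuous_fst)).image
      continuous_fst).isClosed
  have hBclosed : IsClosed B :=
    ((hGcomp.inter_right (isClosed_le continuous_fst continuous_snd)).image
      continuous_fst).isClosed
  -- every s ∈ T has a best response
  have hBR : ∀ s ∈ T, ∃ t ∈ T, ∀ t' ∈ T, h s t' ≤ h s t := by
    intro s hs
    have hc : ContinuousOn (fun t => h s t) T :=
      (hcont.comp (continuous_const.prodMk continuous_id)).continuousOn
    obtain ⟨t, ht, hmax⟩ := hTcomp.exists_isMaxOn hTne hc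
    exact ⟨t, ht, fun t' ht' => hmax ht'⟩
  have hcover : T ⊆ A ∪ B := by
    intro s hs
    obtain ⟨t, ht, hmax⟩ := hBR s hs
    rcases le_total t s with hts | hst
    · exact Or.inl ⟨(s, t), ⟨⟨hs, ht, hmax⟩, hts⟩, rfl⟩
    · exact Or.inr ⟨(s, t), ⟨⟨hs, ht, hmax⟩, hst⟩, rfl⟩
  have hAne : (T ∩ A).Nonempty := by
    obtain ⟨b, hbT, hbmax⟩ := hTcomp.exists_isGreatest hTne
    obtain ⟨t, ht, hmax⟩ := hBR b hbT
    exact ⟨b, hbT, ⟨(b, t), ⟨⟨hbT, ht, hmax⟩, hbmax ht⟩, rfl⟩⟩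
  have hBne : (T ∩ B).Nonempty := by
    obtain ⟨a, haT, hamin⟩ := hTcomp.exists_isLeast hTne
    obtain ⟨t, ht, hmax⟩ := hBR a haT
    exact ⟨a, haT, ⟨(a, t), ⟨⟨haT, ht, hmax⟩, hamin ht⟩, rfl⟩⟩
  have hpc : IsPreconnected T := hTconv.isPreconnected
  obtain ⟨s, hsT, hsA, hsB⟩ :=
    (isPreconnected_closed_iff.mp hpc) A B hAclosed hBclosed hcover hAne hBne
  -- extract best responses on both sides of s
  obtain ⟨⟨s₁, t₁⟩, ⟨⟨_, ht₁T, hmax₁⟩, ht₁le⟩, rfl⟩ := hsA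
  obtain ⟨⟨s₂, t₂⟩, ⟨⟨_, ht₂T, hmax₂⟩, hle₂⟩, hps⟩ := hsB
  simp only at ht₁le hle₂ hps hmax₁ hmax₂ ht₁T ht₂T
  subst hps
  have hvv : h s₂ t₁ = h s₂ t₂ :=
    le_antisymm (hmax₂ t₁ ht₁T) (hmax₁ t₂ ht₂T)
  -- superlevel set is convex, hence ord-connected; s₂ lies between t₁ and t₂
  have hconv : Convex ℝ {x ∈ T | h s₂ t₁ ≤ h s₂ x} := by
    have := hqc s₂ hsT (h s₂ t₁)
    simpa [hh] using this
  have hsmem : s₂ ∈ {x ∈ T | h s₂ t₁ ≤ h s₂ x} := by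
    have h1 : t₁ ∈ {x ∈ T | h s₂ t₁ ≤ h s₂ x} := ⟨ht₁T, le_refl _⟩
    have h2 : t₂ ∈ {x ∈ T | h s₂ t₁ ≤ h s₂ x} := ⟨ht₂T, hvv.le⟩
    exact hconv.ordConnected.out h1 h2 ⟨ht₁le, hle₂⟩
  refine ⟨s₂, hsT, fun x hx => ?_⟩
  have hfix : h s₂ s₂ = u (fun _ => s₂) := by
    simp only [hh]
    congr 1
    exact Function.update_eq_self i0 (fun _ => s₂)
  calc u (Function.update (fun _ => s₂) i0 x) = h s₂ x := rfl
    _ ≤ h s₂ t₁ := hmax₁ x hx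
    _ ≤ h s₂ s₂ := hsmem.2
    _ = u (fun _ => s₂) := hfix
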